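/- Let X be a topological space, A = {a_n : n ∈ ℕ} a countable subset of X, Y a compact Hausdorff space, and f : X × Y → ℝ a separately continuous function such that the continuous mapping φ : Y → C_p(A) defined by φ(y)(a) = f(a,y) is a homeomorphic embedding, and such that for every n ∈ ℕ there exist y'_n, y''_n ∈ Y with |f(a_k, y'_n) − f(a_k, y''_n)| ≤ 1/(n+1) for all k = 1, …, n and |f(a_k, y'_n) − f(a_k, y''_n)| ≥ 1 for all k > n. Then A is strongly functionally discrete in X. -/

import Mathlib

open Set Topology Filter

/-- `C_p(X)`: the continuous real-valued functions on `X`, topologized by pointwise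
convergence (i.e. as a subspace of `X → ℝ` with the product topology). -/
abbrev Cp (X : Type*) [TopologicalSpace X] : Type _ := {f : X → ℝ // Continuous f}

/-- `C_p*(X)`: the bounded continuous real-valued functions on `X`, topologized by
pointwise convergence. -/
abbrev CpStar (X : Type*) [TopologicalSpace X] : Type _ :=
  {f : X → ℝ // Continuous f ∧ ∃ M : ℝ, ∀ x, |f x| ≤ M}

/-- A set is functionally open (a cozero set) if it is the cozero set of a
continuous real-valued function. -/
def FunctionallyOpen {X : Type*} [TopologicalSpace X] (U : Set X) : Prop :=
  ∃ f : X → ℝ, Continuous f ∧ U = f ⁻¹' ({0}ᶜ)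

/-- A subset `A` is strongly functionally discrete in `X` if there is a family of
functionally open sets `G a ∋ a` (for `a ∈ A`) which is discrete in `X`: every point
of `X` has a neighborhood meeting `G a` for at most one `a ∈ A`. -/
def StronglyFunctionallyDiscrete {X : Type*} [TopologicalSpace X] (A : Set X) : Prop :=
  ∃ G : A → Set X,
    (∀ a : A, (a : X) ∈ G a) ∧
    (∀ a : A, FunctionallyOpen (G a)) ∧
    (∀ x : X, ∃ V ∈ 𝓝 x, {a : A | (V ∩ G a).Nonempty}.Subsingleton)

section Aux
variable {X : Type*}

/-- Running minimum of a sequence of functions. -/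
def wAux (u : ℕ → X → ℝ) : ℕ → X → ℝ
  | 0 => u 0
  | n+1 => fun x => min (wAux u n x) (u (n+1) x)

lemma wAux_le (u : ℕ → X → ℝ) (n : ℕ) (x : X) : wAux u n x ≤ u n x := by
  cases n with
  | zero => exact le_refl _
  | succ n => exact min_le_right _ _

lemma wAux_anti (u : ℕ → X → ℝ) (x : X) : Antitone (fun n => wAux u n x) :=
  antitone_nat_of_succ_le fun n => min_le_left _ _

lemma le_wAux (u : ℕ → X → ℝ) (x : X) (c : ℝ) :
    ∀ n, (∀ m ≤ n, c ≤ u m x) → c ≤ wAux u n x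
  | 0, h => h 0 le_rfl
  | n+1, h => le_min (le_wAux u x c n fun m hm => h m (hm.trans n.le_succ)) (h (n+1) le_rfl)

lemma wAux_cont [TopologicalSpace X] {u : ℕ → X → ℝ} (hu : ∀ n, Continuous (u n)) :
    ∀ n, Continuous (wAux u n)
  | 0 => hu 0
  | n+1 => Continuous.min (wAux_cont hu n) (hu (n+1))

/-- A cozero-set description of `{3/4 < g} ∩ {h < 2/3}`. -/
lemma funOpen_band [TopologicalSpace X] {g h : X → ℝ} (hg : Continuous g)
    (hh : Continuous h) :
    FunctionallyOpen {z : X | 3/4 < g z ∧ h z < 2/3} := by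
  refine ⟨fun z => max (g z - 3/4) 0 * max (2/3 - h z) 0,
    ((hg.sub continuous_const).max continuous_const).mul
      ((continuous_const.sub hh).max continuous_const), ?_⟩
  ext z
  simp only [mem_setOf_eq, mem_preimage, mem_compl_iff, mem_singleton_iff, mul_ne_zero_iff]
  constructor
  · rintro ⟨h1, h2⟩
    constructor
    · have : (0:ℝ) < max (g z - 3/4) 0 := lt_max_of_lt_left (by linarith)
      exact ne_of_gt this
    · have : (0:ℝ) < max (2/3 - h z) 0 := lt_max_of_lt_left (by linarith)
      exact ne_of_gt this
  · rintro ⟨h1, h2⟩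
    have hg0 : 0 < max (g z - 3/4) 0 := lt_of_le_of_ne (le_max_right _ _) (Ne.symm h1)
    have hh0 : 0 < max (2/3 - h z) 0 := lt_of_le_of_ne (le_max_right _ _) (Ne.symm h2)
    have hg1 : 0 < g z - 3/4 := by
      rcases max_cases (g z - 3/4) (0:ℝ) with ⟨he, _⟩ | ⟨he, _⟩
      · rwa [he] at hg0
      · rw [he] at hg0; exact absurd hg0 (lt_irrefl _)
    have hh1 : 0 < 2/3 - h z := by
      rcases max_cases (2/3 - h z) (0:ℝ) with ⟨he, _⟩ | ⟨he, _⟩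
      · rwa [he] at hh0
      · rw [he] at hh0; exact absurd hh0 (lt_irrefl _)
    exact ⟨by linarith, by linarith⟩

end Aux

/-- Proposition 2.1: if `Y` is compact Hausdorff, `f : X × Y → ℝ` is separately
continuous, the induced map `Y → C_p(A)` is a homeomorphic embedding, and the
splitting condition holds, then `A = {a_n : n ∈ ℕ}` is strongly functionally
discrete in `X`. -/
theorem stmt_1 {X Y : Type*} [TopologicalSpace X] [TopologicalSpace Y]
    [CompactSpace Y] [T2Space Y]
    (a : ℕ → X) (A : Set X) (hA : A = Set.range a)
    (f : X × Y → ℝ)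
    (hsep₁ : ∀ x : X, Continuous fun y : Y => f (x, y))
    (hsep₂ : ∀ y : Y, Continuous fun x : X => f (x, y))
    (hemb : IsEmbedding fun y : Y =>
      (⟨fun p : A => f (p.1, y),
        (hsep₂ y).comp continuous_subtype_val⟩ : Cp A))
    (hsplit : ∀ n : ℕ, ∃ y' y'' : Y,
      (∀ k < n, |f (a k, y') - f (a k, y'')| ≤ 1 / (n + 1)) ∧
      (∀ k ≥ n, 1 ≤ |f (a k, y') - f (a k, y'')|)) :
    StronglyFunctionallyDiscrete A := by
  classical
  choose y' y'' h1 h2 using hsplit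
  set u : ℕ → X → ℝ := fun n x => |f (x, y' n) - f (x, y'' n)| with hu_def
  have ucont : ∀ n, Continuous (u n) := fun n => ((hsep₂ (y' n)).sub (hsep₂ (y'' n))).abs
  set w : ℕ → X → ℝ := wAux u with hw_def
  have wcont : ∀ n, Continuous (w n) := wAux_cont ucont
  -- a cluster point of the sequence of pairs
  have : Filter.map (fun n => (y' n, y'' n)) atTop ≤ Filter.principal (univ : Set (Y × Y)) := by
    simp
  obtain ⟨c, -, hc⟩ := (isCompact_univ : IsCompact (univ : Set (Y × Y))).exists_mapClusterPt this
  -- the cluster point is on the diagonal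
  have hdiag : c.1 = c.2 := by
    apply hemb.injective
    apply Subtype.ext
    funext p
    obtain ⟨k, hk⟩ : ∃ k, a k = (p : X) := by
      show (p : X) ∈ Set.range a
      rw [← hA]; exact p.2
    show f ((p : X), c.1) = f ((p : X), c.2)
    rw [← hk]
    -- the sequence |f (a k, y' n) - f (a k, y'' n)| tends to 0
    have htend : Tendsto (fun n => |f (a k, y' n) - f (a k, y'' n)|) atTop (𝓝 0) := by
      apply squeeze_zero' (Eventually.of_forall fun n => abs_nonneg _)
        (g := fun n : ℕ => 1 / ((n : ℝ) + 1))
      · filter_upwards [eventually_gt_atTop k] with n hn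
        exact h1 n k hn
      · exact tendsto_one_div_add_atTop_nhds_zero_nat
    -- and the continuous map (y,z) ↦ |f (a k, y) - f (a k, z)| sends c to a cluster value
    have hcont : Continuous (fun p : Y × Y => |f (a k, p.1) - f (a k, p.2)|) :=
      (((hsep₁ (a k)).comp continuous_fst).sub ((hsep₁ (a k)).comp continuous_snd)).abs
    have hcl0 := MapClusterPt.continuousAt_comp hcont.continuousAt hc
    have hcl : MapClusterPt (|f (a k, c.1) - f (a k, c.2)|) atTop
        (fun n => |f (a k, y' n) - f (a k, y'' n)|) := hcl0
    have h0 : |f (a k, c.1) - f (a k, c.2)| = 0 := by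
      have hle : Filter.map (fun n => |f (a k, y' n) - f (a k, y'' n)|) atTop ≤ 𝓝 (0:ℝ) := htend
      exact eq_of_nhds_neBot (hcl.clusterPt.mono hle)
    have := abs_eq_zero.mp h0
    linarith
  -- pointwise: for every x there is n with w n x < 3/4
  have hsmall : ∀ x : X, ∃ n, w n x < 3/4 := by
    intro x
    have hcont : Continuous (fun p : Y × Y => |f (x, p.1) - f (x, p.2)|) :=
      (((hsep₁ x).comp continuous_fst).sub ((hsep₁ x).comp continuous_snd)).abs
    have hcl0 := MapClusterPt.continuousAt_comp hcont.continuousAt hc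
    have hcl : MapClusterPt (|f (x, c.1) - f (x, c.2)|) atTop (fun n => u n x) := hcl0
    have h0 : |f (x, c.1) - f (x, c.2)| = 0 := by rw [hdiag]; simp
    rw [h0] at hcl
    have := (mapClusterPt_iff_frequently.mp hcl) (Set.Iio (3/4)) (Iio_mem_nhds (by norm_num))
    obtain ⟨n, hn⟩ := this.exists
    exact ⟨n, lt_of_le_of_lt (wAux_le u n x) hn⟩
  -- properties of w on the points a k
  have hwbig : ∀ n, 1 ≤ w n (a n) := by
    intro n
    exact le_wAux u (a n) 1 n fun m hm => h2 m n hm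
  have hwsmallnext : ∀ n, w (n + 1) (a n) < 2/3 := by
    intro n
    have h1n := h1 (n + 1) n (Nat.lt_succ_self n)
    push_cast at h1n
    have hc2 : (1 : ℝ) / ((n:ℝ) + 1 + 1) ≤ 1 / 2 := by
      apply one_div_le_one_div_of_le
      · norm_num
      · linarith [Nat.cast_nonneg (α := ℝ) n]
    have hle : u (n + 1) (a n) ≤ 1 / ((n:ℝ) + 1 + 1) := h1n
    calc w (n + 1) (a n) ≤ u (n + 1) (a n) := wAux_le u (n + 1) (a n)
      _ ≤ 1 / 2 := le_trans hle hc2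
      _ < 2/3 := by norm_num
  -- index function
  have hidx : ∀ p : A, ∃ k, a k = (p : X) := by
    intro p
    show (p : X) ∈ Set.range a
    rw [← hA]; exact p.2
  choose idx hidx' using hidx
  -- the discrete family
  refine ⟨fun p => {z : X | 3/4 < w (idx p) z ∧ w (idx p + 1) z < 2/3}, ?_, ?_, ?_⟩
  · intro p
    constructor
    · have := hwbig (idx p); rw [hidx' p] at this
      show (3 : ℝ)/4 < w (idx p) (p : X); linarith
    · have := hwsmallnext (idx p); rw [hidx' p] at this; exact this
  · intro p
    exact funOpen_band (wcont (idx p)) (wcont (idx p + 1))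
  · intro x
    obtain ⟨n₀, hn₀, hn₀min⟩ :
        ∃ n₀, w n₀ x < 3/4 ∧ ∀ m < n₀, ¬ (w m x < 3/4) := by
      have hP : ∃ n, w n x < 3/4 := hsmall x
      exact ⟨Nat.find hP, Nat.find_spec hP, fun m hm => Nat.find_min hP hm⟩
    refine ⟨{z : X | w n₀ z < 3/4} ∩ ⋂ m ∈ Finset.range n₀, {z : X | 2/3 < w m z}, ?_, ?_⟩
    · apply IsOpen.mem_nhds
      · exact ((isOpen_lt (wcont n₀) continuous_const)).inter
          (isOpen_biInter_finset fun m _ => isOpen_lt continuous_const (wcont m))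
      · refine ⟨hn₀, ?_⟩
        simp only [Set.mem_iInter, Finset.mem_range]
        intro m hm
        have := hn₀min m hm
        show (2:ℝ)/3 < w m x; linarith [not_lt.mp this]
    · -- any point of V in G p forces idx p = n₀ - 1
      have key : ∀ p : A, ((({z : X | w n₀ z < 3/4} ∩
          ⋂ m ∈ Finset.range n₀, {z : X | 2/3 < w m z}) ∩
          {z : X | 3/4 < w (idx p) z ∧ w (idx p + 1) z < 2/3}).Nonempty) → idx p + 1 = n₀ := by
        rintro p ⟨z, ⟨hz1, hz2⟩, hz3, hz4⟩
        simp only [Set.mem_iInter, Finset.mem_range, mem_setOf_eq] at hz1 hz2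
        have hlt : idx p < n₀ := by
          by_contra h
          push_neg at h
          have := wAux_anti u z h
          show False
          have : w (idx p) z ≤ w n₀ z := this
          linarith
        have hge : ¬ (idx p + 1 < n₀) := by
          intro h
          have := hz2 (idx p + 1) h
          linarith
        omega
      intro p hp q hq
      have hpq : idx p = idx q := by
        have := key p hp; have := key q hq; omega
      have : (p : X) = (q : X) := by rw [← hidx' p, ← hidx' q, hpq]
      exact Subtype.ext this
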